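/- Consider the map (f, h) : ℂ² → ℂ² given by the Pinchuk polynomials f and h, and let B = {(F̄, H̄) ∈ ℂ² : F̄·(F̄ − H̄(H̄ + 1)) = 0}. Then the restriction of (f, h) from ℂ² \ f⁻¹(0) to ℂ² \ B is a homeomorphism (in particular it is a bijection between these sets). -/

import Mathlib

noncomputable section

/-- The complex Pinchuk auxiliary polynomial `t = xy - 1`. -/
def cT (x y : ℂ) : ℂ := x * y - 1

/-- The complex Pinchuk auxiliary polynomial `h = t(xt + 1)`. -/
def cH (x y : ℂ) : ℂ := cT x y * (x * cT x y + 1)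

/-- The complex Pinchuk auxiliary polynomial `f = (xt+1)^2 (t^2 + y)`. -/
def cF (x y : ℂ) : ℂ := (x * cT x y + 1) ^ 2 * ((cT x y) ^ 2 + y)

/-- The complex Pinchuk polynomial `u(f,h)`. -/
def cU (f h : ℂ) : ℂ :=
  (1/4) * f * (75*f^3 + 300*f^2*h + 450*f*h^2 + 276*f^2 + 828*f*h + 48*h^2 + 364*f + 48*h)

/-- The complexification `ℂF : ℂ² → ℂ²` of Pinchuk's map, given by the same
    polynomials `p = f + h` and `q = -t² - 6th(h+1) + u(f,h)`. -/
def cPinchuk : ℂ × ℂ → ℂ × ℂ := fun v =>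
  (cF v.1 v.2 + cH v.1 v.2,
   -(cT v.1 v.2)^2 - 6 * cT v.1 v.2 * cH v.1 v.2 * (cH v.1 v.2 + 1)
     + cU (cF v.1 v.2) (cH v.1 v.2))

/-- A continuous map `g : X → Y` is *not proper at* `y ∈ Y` if there is no
    neighborhood `U` of `y` such that `g ⁻¹(cl U)` is compact. -/
def NotProperAt {X Y : Type*} [TopologicalSpace X] [TopologicalSpace Y]
    (g : X → Y) (y : Y) : Prop :=
  ¬ ∃ U ∈ nhds y, IsCompact (g ⁻¹' closure U)

/-- The map `(f, h) : ℂ² → ℂ²`. -/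
def cfh : ℂ × ℂ → ℂ × ℂ := fun v => (cF v.1 v.2, cH v.1 v.2)

/-- The set `B = {(F̄, H̄) ∈ ℂ² : F̄(F̄ - H̄(H̄+1)) = 0}`. -/
def setB : Set (ℂ × ℂ) := {w | w.1 * (w.1 - w.2 * (w.2 + 1)) = 0}

/-- Explicit inverse of `(f,h)` off the bad set `B`. -/
def cInv (w : ℂ × ℂ) : ℂ × ℂ :=
  ((w.1 / (w.1 - w.2 * (w.2 + 1))) ^ 2 * (w.2 + 1) / w.1,
   (w.1 - w.2 ^ 2) * ((w.1 - w.2 * (w.2 + 1)) / w.1) ^ 2)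

lemma fh_prod (x y : ℂ) :
    cF x y * (cF x y - cH x y * (cH x y + 1))
      = (x * (x * y - 1) + 1) ^ 3 * ((x * y - 1) ^ 2 + y) ^ 2 := by
  simp only [cF, cH, cT]; ring

lemma cfh_mem (v : ℂ × ℂ) (hv : cF v.1 v.2 ≠ 0) : cfh v ∈ (setBᶜ : Set (ℂ × ℂ)) := by
  have ha : (v.1 * (v.1 * v.2 - 1) + 1) ≠ 0 := by
    intro h
    apply hv
    simp [cF, cT, h]
  have hs : ((v.1 * v.2 - 1) ^ 2 + v.2) ≠ 0 := by
    intro h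
    apply hv
    simp [cF, cT, h]
  simp only [setB, Set.mem_compl_iff, Set.mem_setOf_eq, cfh]
  rw [fh_prod]
  exact mul_ne_zero (pow_ne_zero _ ha) (pow_ne_zero _ hs)

lemma cfh_cInv (w : ℂ × ℂ) (h1 : w.1 ≠ 0) (h2 : w.1 - w.2 * (w.2 + 1) ≠ 0) :
    cfh (cInv w) = w := by
  obtain ⟨F, H⟩ := w
  simp only at h1 h2
  set D := F - H * (H + 1) with hD
  set x : ℂ := (F / D) ^ 2 * (H + 1) / F with hx
  set y : ℂ := (F - H ^ 2) * (D / F) ^ 2 with hy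
  have hcInv : cInv (F, H) = (x, y) := rfl
  have ht : cT x y = H * D / F := by
    rw [cT, hx, hy]; field_simp; ring
  have ha : x * cT x y + 1 = F / D := by
    rw [ht, hx]; field_simp; ring
  have hh : cH x y = H := by
    rw [cH, ha, ht]; field_simp
  have hf : cF x y = F := by
    rw [cF, ha, ht, hy]; field_simp; ring
  rw [hcInv]
  simp [cfh, hf, hh]

lemma cInv_cfh (v : ℂ × ℂ) (hv : cF v.1 v.2 ≠ 0) : cInv (cfh v) = v := by
  obtain ⟨x, y⟩ := v
  have ha : (x * (x * y - 1) + 1) ≠ 0 := by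
    intro h; apply hv; simp [cF, cT, h]
  have hs : ((x * y - 1) ^ 2 + y) ≠ 0 := by
    intro h; apply hv; simp [cF, cT, h]
  set A : ℂ := x * (x * y - 1) + 1 with hA
  set S : ℂ := (x * y - 1) ^ 2 + y with hS
  have hcF : cF x y = A ^ 2 * S := by simp only [cF, cT, hA, hS]
  have hcH : cH x y = (x * y - 1) * A := by simp only [cH, cT, hA]
  have h2 : cF x y - cH x y * (cH x y + 1) = A * S := by
    simp only [cF, cH, cT, hA, hS]; ring
  have h3 : cH x y + 1 = x * S := by
    simp only [cH, cT, hS]; ring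
  have h4 : cF x y - cH x y ^ 2 = A ^ 2 * y := by
    simp only [cF, cH, cT, hA, hS]; ring
  simp only [cfh, cInv]
  refine Prod.ext ?_ ?_
  · show (cF x y / (cF x y - cH x y * (cH x y + 1))) ^ 2 * (cH x y + 1) / cF x y = x
    rw [h2, h3, hcF]
    field_simp
  · show (cF x y - cH x y ^ 2) * ((cF x y - cH x y * (cH x y + 1)) / cF x y) ^ 2 = y
    rw [h2, h4, hcF]
    field_simp

lemma mem_compl_setB {w : ℂ × ℂ} (hw : w ∈ (setBᶜ : Set (ℂ × ℂ))) :
    w.1 ≠ 0 ∧ w.1 - w.2 * (w.2 + 1) ≠ 0 := by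
  simp only [setB, Set.mem_compl_iff, Set.mem_setOf_eq, mul_eq_zero, not_or] at hw
  exact hw

/-- The restriction of `(f, h)` from `ℂ² \ f⁻¹(0)` to `ℂ² \ B` is a homeomorphism. -/
theorem pinchuk_fh_restriction_homeomorph :
    ∃ e : {v : ℂ × ℂ | cF v.1 v.2 ≠ 0} ≃ₜ (setBᶜ : Set (ℂ × ℂ)),
      ∀ v : {v : ℂ × ℂ | cF v.1 v.2 ≠ 0}, (e v : ℂ × ℂ) = cfh v := by

  have hmem : ∀ v : {v : ℂ × ℂ | cF v.1 v.2 ≠ 0}, cfh v ∈ (setBᶜ : Set (ℂ × ℂ)) :=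
    fun v => cfh_mem v v.2
  have hmem' : ∀ w : (setBᶜ : Set (ℂ × ℂ)), cInv w ∈ {v : ℂ × ℂ | cF v.1 v.2 ≠ 0} := by
    intro w
    obtain ⟨h1, h2⟩ := mem_compl_setB w.2
    have := cfh_cInv w h1 h2
    have hF : cF (cInv w.val).1 (cInv w.val).2 = w.val.1 := congrArg Prod.fst this
    simp only [Set.mem_setOf_eq, hF]
    exact h1
  refine ⟨{ toFun := fun v => ⟨cfh v, hmem v⟩,
            invFun := fun w => ⟨cInv w, hmem' w⟩,
            left_inv := ?_, right_inv := ?_,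
            continuous_toFun := ?_, continuous_invFun := ?_ }, fun v => rfl⟩
  · intro v
    exact Subtype.ext (cInv_cfh v v.2)
  · intro w
    obtain ⟨h1, h2⟩ := mem_compl_setB w.2
    exact Subtype.ext (cfh_cInv w h1 h2)
  · apply Continuous.subtype_mk
    have : Continuous cfh := by unfold cfh cF cH cT; fun_prop
    exact this.comp continuous_subtype_val
  · apply Continuous.subtype_mk
    have h1 : ∀ w : (setBᶜ : Set (ℂ × ℂ)), w.val.1 ≠ 0 := fun w => (mem_compl_setB w.2).1
    have h2 : ∀ w : (setBᶜ : Set (ℂ × ℂ)), w.val.1 - w.val.2 * (w.val.2 + 1) ≠ 0 :=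
      fun w => (mem_compl_setB w.2).2
    have hc : Continuous fun w : (setBᶜ : Set (ℂ × ℂ)) => (w.val.1 : ℂ) := by fun_prop
    have hc2 : Continuous fun w : (setBᶜ : Set (ℂ × ℂ)) => (w.val.2 : ℂ) := by fun_prop
    have hd : Continuous fun w : (setBᶜ : Set (ℂ × ℂ)) =>
        w.val.1 / (w.val.1 - w.val.2 * (w.val.2 + 1)) :=
      hc.div (by fun_prop) h2
    have he : Continuous fun w : (setBᶜ : Set (ℂ × ℂ)) =>
        (w.val.1 - w.val.2 * (w.val.2 + 1)) / w.val.1 :=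
      Continuous.div (by fun_prop) hc h1
    unfold cInv
    exact (((hd.pow 2).mul (by fun_prop)).div hc h1).prodMk
      ((by fun_prop : Continuous fun w : (setBᶜ : Set (ℂ × ℂ)) =>
          w.val.1 - w.val.2 ^ 2).mul (he.pow 2))
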